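/- A ring extension A ⊇ B is H-separable (A ⊗_B A ⊕ * ≅ A^n as A-A-bimodules for some n) if and only if there exist elements e_1,…,e_n ∈ (A ⊗_B A)^A (A-central elements) and r_1,…,r_n ∈ A^B (the centralizer of B in A) such that 1 ⊗_B 1 = Σ_{i=1}^n r_i e_i. -/

import Mathlib

/-!  A noncommutative relative tensor product `L ⊗_C R` for a ring `C` mapping
into rings `L` (acting on the right through `f`) and `R` (acting on the left
through `g`), together with the outer left `L`-action `lact`, the outer right
`R`-action `ract`, a lifting principle for balanced biadditive maps, and the
multiplication map. -/

open scoped TensorProduct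

noncomputable section
namespace NCT

variable {C L R : Type*} [Ring C] [Ring L] [Ring R]

/-- The submodule of relations `(l * f c) ⊗ r - l ⊗ (g c * r)`. -/
def rel (f : C →+* L) (g : C →+* R) : Submodule ℤ (L ⊗[ℤ] R) :=
  Submodule.span ℤ
    {x | ∃ (l : L) (c : C) (r : R), x = (l * f c) ⊗ₜ[ℤ] r - l ⊗ₜ[ℤ] (g c * r)}

/-- The relative tensor product `L ⊗_C R`. -/
def Tens (f : C →+* L) (g : C →+* R) : Type _ := (L ⊗[ℤ] R) ⧸ rel f g

instance (f : C →+* L) (g : C →+* R) : AddCommGroup (Tens f g) :=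
  inferInstanceAs (AddCommGroup ((L ⊗[ℤ] R) ⧸ rel f g))

variable (f : C →+* L) (g : C →+* R)

/-- The canonical image of `l ⊗ r` in `L ⊗_C R`. -/
def tmul (l : L) (r : R) : Tens f g := Submodule.Quotient.mk (l ⊗ₜ[ℤ] r)

lemma tmul_rel (l : L) (c : C) (r : R) :
    tmul f g (l * f c) r = tmul f g l (g c * r) := by
  refine (Submodule.Quotient.eq _).2 ?_
  exact Submodule.subset_span ⟨l, c, r, rfl⟩

lemma tmul_add_left (l l' : L) (r : R) :
    tmul f g (l + l') r = tmul f g l r + tmul f g l' r := by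
  show Submodule.Quotient.mk _ = _
  rw [TensorProduct.add_tmul, Submodule.Quotient.mk_add]; rfl

lemma tmul_add_right (l : L) (r r' : R) :
    tmul f g l (r + r') = tmul f g l r + tmul f g l r' := by
  show Submodule.Quotient.mk _ = _
  rw [TensorProduct.tmul_add, Submodule.Quotient.mk_add]; rfl

/-- Package a biadditive map as a bundled `AddMonoidHom`-valued hom. -/
def mkBilin {M N P : Type*} [AddCommGroup M] [AddCommGroup N] [AddCommGroup P]
    (φ : M → N → P)
    (h1 : ∀ m m' n, φ (m + m') n = φ m n + φ m' n)
    (h2 : ∀ m n n', φ m (n + n') = φ m n + φ m n') : M →+ N →+ P :=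
  AddMonoidHom.mk' (fun m => AddMonoidHom.mk' (φ m) (h2 m))
    (fun m m' => by ext n; exact h1 m m' n)

@[simp] lemma mkBilin_apply {M N P : Type*} [AddCommGroup M] [AddCommGroup N] [AddCommGroup P]
    (φ : M → N → P) (h1 h2) (m : M) (n : N) : mkBilin φ h1 h2 m n = φ m n := rfl

/-- Lift a balanced biadditive map to the relative tensor product. -/
def lift {P : Type*} [AddCommGroup P] (φ : L →+ R →+ P)
    (hbal : ∀ l c r, φ (l * f c) r = φ l (g c * r)) : Tens f g →+ P :=
  (Submodule.liftQ (rel f g)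
    (TensorProduct.liftAddHom φ (by
      intro n l r
      simp only [AddMonoidHom.map_zsmul, AddMonoidHom.smul_apply]) ).toIntLinearMap
    (by
      rw [rel, Submodule.span_le]
      rintro x ⟨l, c, r, rfl⟩
      simp only [SetLike.mem_coe, LinearMap.mem_ker, AddMonoidHom.coe_toIntLinearMap,
        map_sub, TensorProduct.liftAddHom_tmul]
      rw [hbal, sub_self])).toAddMonoidHom

@[simp] lemma lift_tmul {P : Type*} [AddCommGroup P] (φ : L →+ R →+ P)
    (hbal : ∀ l c r, φ (l * f c) r = φ l (g c * r)) (l : L) (r : R) :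
    lift f g φ hbal (tmul f g l r) = φ l r := rfl

/-- The outer left action of `L` on `L ⊗_C R`. -/
def lact (l : L) : Tens f g →+ Tens f g :=
  lift f g (mkBilin (fun l' r => tmul f g (l * l') r)
      (fun a b r => by rw [mul_add, tmul_add_left])
      (fun a r s => by rw [tmul_add_right]))
    (fun l' c r => by simp only [mkBilin_apply]; rw [← mul_assoc, tmul_rel])

@[simp] lemma lact_tmul (l l' : L) (r : R) :
    lact f g l (tmul f g l' r) = tmul f g (l * l') r := rfl

/-- The outer right action of `R` on `L ⊗_C R`. -/
def ract (r : R) : Tens f g →+ Tens f g :=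
  lift f g (mkBilin (fun l' r' => tmul f g l' (r' * r))
      (fun a b r' => by rw [tmul_add_left])
      (fun a r' s => by rw [add_mul, tmul_add_right]))
    (fun l' c r' => by simp only [mkBilin_apply]; rw [tmul_rel, mul_assoc])

@[simp] lemma ract_tmul (r r' : R) (l : L) :
    ract f g r (tmul f g l r') = tmul f g l (r' * r) := rfl

/-- The map induced on relative tensor products by a ring map on the left factor. -/
def mapLeft {L' : Type*} [Ring L'] (h : L →+* L') :
    Tens f g →+ Tens (h.comp f) g :=
  lift f g (mkBilin (fun l r => tmul (h.comp f) g (h l) r)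
      (fun a b r => by rw [map_add, tmul_add_left])
      (fun a r s => by rw [tmul_add_right]))
    (fun l c r => by
      simp only [mkBilin_apply, map_mul]
      exact tmul_rel (h.comp f) g (h l) c r)

@[simp] lemma mapLeft_tmul {L' : Type*} [Ring L'] (h : L →+* L') (l : L) (r : R) :
    mapLeft f g h (tmul f g l r) = tmul (h.comp f) g (h l) r := rfl

/-- The multiplication map `L ⊗_C R → R`, `l ⊗ r ↦ jl l * r`, for a ring map
`jl : L → R` compatible with the two maps from `C`. -/
def mulMap (jl : L →+* R) (hcomp : ∀ c, jl (f c) = g c) : Tens f g →+ R :=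
  lift f g (mkBilin (fun l r => jl l * r)
      (fun a b r => by rw [map_add, add_mul])
      (fun a r s => by rw [mul_add]))
    (fun l c r => by simp only [mkBilin_apply]; rw [map_mul, hcomp, mul_assoc])

@[simp] lemma mulMap_tmul (jl : L →+* R) (hcomp : ∀ c, jl (f c) = g c) (l : L) (r : R) :
    mulMap f g jl hcomp (tmul f g l r) = jl l * r := rfl

/-- Induction principle: every element of `L ⊗_C R` is built from `tmul`s. -/
lemma tens_induction {p : Tens f g → Prop} (zero : p 0)
    (tm : ∀ l r, p (tmul f g l r)) (add : ∀ x y, p x → p y → p (x + y)) :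
    ∀ x, p x := by
  intro x
  obtain ⟨y, rfl⟩ := Submodule.Quotient.mk_surjective _ x
  induction y using TensorProduct.induction_on with
  | zero => exact zero
  | tmul l r => exact tm l r
  | add a b ha hb =>
      rw [Submodule.Quotient.mk_add]
      exact add _ _ ha hb

end NCT
end

noncomputable section
open NCT

/-- The tower `A ⊇ B ⊇ C` (given by injective ring maps `ι : C → B`, `j : B → A`) is
*left relative H-separable*: `B ⊗_C A ⊕ * ≅ A^n` as `B`-`A`-bimodules. -/
def LeftRelHSep {C B A : Type*} [Ring C] [Ring B] [Ring A]
    (ι : C →+* B) (j : B →+* A) (n : ℕ) : Prop :=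
  ∃ (i : Tens ι (j.comp ι) →+ (Fin n → A)) (p : (Fin n → A) →+ Tens ι (j.comp ι)),
    (∀ (b : B) x, i (lact ι (j.comp ι) b x) = fun k => j b * i x k) ∧
    (∀ (a : A) x, i (ract ι (j.comp ι) a x) = fun k => i x k * a) ∧
    (∀ (b : B) v, p (fun k => j b * v k) = lact ι (j.comp ι) b (p v)) ∧
    (∀ (a : A) v, p (fun k => v k * a) = ract ι (j.comp ι) a (p v)) ∧
    ∀ x, p (i x) = x

/-- `B` is a *left relative separable extension of `C` in `A`*: the multiplication map
`μ : B ⊗_C A → A` splits as a `B`-`A`-bimodule epimorphism. -/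
def LeftRelSep {C B A : Type*} [Ring C] [Ring B] [Ring A]
    (ι : C →+* B) (j : B →+* A) : Prop :=
  ∃ σ : A →+ Tens ι (j.comp ι),
    (∀ (b : B) (a : A), σ (j b * a) = lact ι (j.comp ι) b (σ a)) ∧
    (∀ (a a' : A), σ (a * a') = ract ι (j.comp ι) a' (σ a)) ∧
    ∀ a, mulMap ι (j.comp ι) j (fun _ => rfl) (σ a) = a

/-- `B ⊇ C` is a separable extension: there is a `B`-central element
`e ∈ B ⊗_C B` with `μ(e) = 1`. -/
def IsSepExt {C B : Type*} [Ring C] [Ring B] (ι : C →+* B) : Prop :=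
  ∃ e : Tens ι ι, (∀ b : B, lact ι ι b e = ract ι ι b e) ∧
    mulMap ι ι (RingHom.id B) (fun _ => rfl) e = 1

namespace NCT
section
variable {C L R : Type*} [Ring C] [Ring L] [Ring R] (f : C →+* L) (g : C →+* R)

lemma lact_add' (l l' : L) (x : Tens f g) :
    lact f g (l + l') x = lact f g l x + lact f g l' x := by
  induction x using tens_induction with
  | zero => simp
  | tm a r => rw [lact_tmul, lact_tmul, lact_tmul, add_mul, tmul_add_left]
  | add x y hx hy => rw [map_add, map_add, map_add, hx, hy]; abel

lemma lact_lact (l l' : L) (x : Tens f g) :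
    lact f g (l * l') x = lact f g l (lact f g l' x) := by
  induction x using tens_induction with
  | zero => simp
  | tm a r => rw [lact_tmul, lact_tmul, lact_tmul, mul_assoc]
  | add x y hx hy => rw [map_add, map_add, map_add, hx, hy]

lemma lact_ract_comm (l : L) (r : R) (x : Tens f g) :
    lact f g l (ract f g r x) = ract f g r (lact f g l x) := by
  induction x using tens_induction with
  | zero => simp
  | tm a b => rfl
  | add x y hx hy =>
      rw [map_add, map_add, map_add, map_add, hx, hy]

end
end NCT

/-- a ring extension `A ⊇ B` is H-separable iff there are `A`-central
elements `e_i ∈ (A ⊗_B A)^A` and centralizer elements `r_i ∈ A^B` with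
`1 ⊗ 1 = Σ r_i e_i`. -/
theorem hSeparable_iff_casimir
    {B A : Type*} [Ring B] [Ring A]
    (j : B →+* A) (hj : Function.Injective j) :
    (∃ (n : ℕ) (i : Tens j j →+ (Fin n → A)) (p : (Fin n → A) →+ Tens j j),
      (∀ (a : A) x, i (lact j j a x) = fun k => a * i x k) ∧
      (∀ (a : A) x, i (ract j j a x) = fun k => i x k * a) ∧
      (∀ (a : A) v, p (fun k => a * v k) = lact j j a (p v)) ∧
      (∀ (a : A) v, p (fun k => v k * a) = ract j j a (p v)) ∧
      ∀ x, p (i x) = x) ↔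
    (∃ (n : ℕ) (e : Fin n → Tens j j) (r : Fin n → A),
      (∀ (k : Fin n) (a : A), lact j j a (e k) = ract j j a (e k)) ∧
      (∀ (k : Fin n) (b : B), r k * j b = j b * r k) ∧
      tmul j j 1 1 = ∑ k, lact j j (r k) (e k)) := by
  constructor
  · rintro ⟨n, i, p, hil, hir, hpl, hpr, hpi⟩
    refine ⟨n, fun k => p (Pi.single k 1), fun k => i (tmul j j 1 1) k, ?_, ?_, ?_⟩
    · intro k a
      have h1 : lact j j a (p (Pi.single k 1)) = p (Pi.single k a) := by
        rw [← hpl]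
        congr 1
        funext m
        simp [Pi.single_apply, mul_ite]
      have h2 : ract j j a (p (Pi.single k 1)) = p (Pi.single k a) := by
        rw [← hpr]
        congr 1
        funext m
        simp [Pi.single_apply, ite_mul]
      rw [h1, h2]
    · intro k b
      have key : lact j j (j b) (tmul j j 1 1) = ract j j (j b) (tmul j j 1 1) := by
        rw [lact_tmul, ract_tmul, mul_one, one_mul]
        have := tmul_rel j j 1 b 1
        rwa [one_mul, mul_one] at this
      have h := congrArg i key
      rw [hil, hir] at h
      exact (congrFun h k).symm
    · have hsum : (fun k => i (tmul j j 1 1) k)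
          = ∑ k : Fin n, Pi.single k (i (tmul j j 1 1) k) :=
        (Finset.univ_sum_single _).symm
      calc tmul j j 1 1 = p (i (tmul j j 1 1)) := (hpi _).symm
        _ = p (∑ k : Fin n, Pi.single k (i (tmul j j 1 1) k)) := by rw [← hsum]
        _ = ∑ k : Fin n, p (Pi.single k (i (tmul j j 1 1) k)) := map_sum p _ _
        _ = ∑ k : Fin n, lact j j (i (tmul j j 1 1) k) (p (Pi.single k 1)) := by
            refine Finset.sum_congr rfl fun k _ => ?_
            rw [← hpl]
            congr 1
            funext m
            simp [Pi.single_apply, mul_ite]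
  · rintro ⟨n, e, r, hcen, hcom, hsum⟩
    refine ⟨n,
      NCT.lift j j (NCT.mkBilin (fun a a' => fun k => a * r k * a')
        (fun a b a' => by funext k; simp [add_mul])
        (fun a a' a'' => by funext k; simp [mul_add]))
        (fun a b a' => by
          funext k
          simp only [NCT.mkBilin_apply]
          rw [mul_assoc a (j b) (r k), ← hcom k b, ← mul_assoc, mul_assoc]),
      AddMonoidHom.mk' (fun v => ∑ k, lact j j (v k) (e k))
        (fun v w => by
          rw [← Finset.sum_add_distrib]
          exact Finset.sum_congr rfl fun k _ => lact_add' j j _ _ _),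
      ?_, ?_, ?_, ?_, ?_⟩
    · intro a x
      induction x using NCT.tens_induction with
      | zero => rw [map_zero, map_zero]; funext k; simp
      | tm l r' =>
          rw [lact_tmul]
          simp only [NCT.lift_tmul, NCT.mkBilin_apply]
          funext k
          simp [mul_assoc]
      | add x y hx hy =>
          rw [map_add, map_add, map_add, hx, hy]
          funext k
          simp [mul_add]
    · intro a x
      induction x using NCT.tens_induction with
      | zero => rw [map_zero, map_zero]; funext k; simp
      | tm l r' =>
          rw [ract_tmul]
          simp only [NCT.lift_tmul, NCT.mkBilin_apply]
          funext k
          simp [mul_assoc]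
      | add x y hx hy =>
          rw [map_add, map_add, map_add, hx, hy]
          funext k
          simp [add_mul]
    · intro a v
      simp only [AddMonoidHom.mk'_apply]
      rw [map_sum]
      exact Finset.sum_congr rfl fun k _ => lact_lact j j _ _ _
    · intro a v
      simp only [AddMonoidHom.mk'_apply]
      rw [map_sum]
      refine Finset.sum_congr rfl fun k _ => ?_
      rw [lact_lact, hcen k a, ← lact_ract_comm]
    · intro x
      induction x using NCT.tens_induction with
      | zero => rw [map_zero, map_zero]
      | tm l r' =>
          simp only [NCT.lift_tmul, NCT.mkBilin_apply, AddMonoidHom.mk'_apply]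
          have step : ∀ k : Fin n, lact j j (l * r k * r') (e k)
              = lact j j l (ract j j r' (lact j j (r k) (e k))) := by
            intro k
            rw [lact_lact, lact_lact, hcen k r', lact_ract_comm]
          calc ∑ k, lact j j (l * r k * r') (e k)
              = ∑ k, lact j j l (ract j j r' (lact j j (r k) (e k))) :=
                Finset.sum_congr rfl fun k _ => step k
            _ = lact j j l (ract j j r' (∑ k, lact j j (r k) (e k))) := by
                rw [map_sum, map_sum]
            _ = tmul j j l r' := by
                rw [← hsum, ract_tmul, lact_tmul, one_mul, mul_one]
      | add x y hx hy => rw [map_add, map_add, hx, hy]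

end
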